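/- arXiv:1905.04324 — 2 statements merged into one kernel-verified Lean document; each statement's English description precedes it below -/
import Mathlib

section
/- There is a constant C > 0 such that for every nonnegative function f on ℤ with ∑_{k∈ℤ} f(k)² < ∞ and every n ≥ 1, n^{−3/2} ∑_{i₁,i₂,i₃=1}^n f(i₁−i₂) f(i₁−i₃) f(i₂−i₃) ≤ C n^{−1/2} (∑_{|k|≤n} f(k)^{3/2})². -/
open scoped BigOperators

lemma amgm3 (x y z : ℝ) (hx : 0 ≤ x) (hy : 0 ≤ y) (hz : 0 ≤ z) :
    x * y * z ≤ (x ^ ((3:ℝ)/2) * y ^ ((3:ℝ)/2) + y ^ ((3:ℝ)/2) * z ^ ((3:ℝ)/2)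
      + x ^ ((3:ℝ)/2) * z ^ ((3:ℝ)/2)) / 3 := by
  set u : ℝ := x ^ ((3:ℝ)/2) * y ^ ((3:ℝ)/2) with hu
  set v : ℝ := y ^ ((3:ℝ)/2) * z ^ ((3:ℝ)/2) with hv
  set w : ℝ := x ^ ((3:ℝ)/2) * z ^ ((3:ℝ)/2) with hw
  have hun : 0 ≤ u := mul_nonneg (Real.rpow_nonneg hx _) (Real.rpow_nonneg hy _)
  have hvn : 0 ≤ v := mul_nonneg (Real.rpow_nonneg hy _) (Real.rpow_nonneg hz _)
  have hwn : 0 ≤ w := mul_nonneg (Real.rpow_nonneg hx _) (Real.rpow_nonneg hz _)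
  have key : u ^ ((1:ℝ)/3) * v ^ ((1:ℝ)/3) * w ^ ((1:ℝ)/3) ≤ 1/3*u + 1/3*v + 1/3*w :=
    Real.geom_mean_le_arith_mean3_weighted (by norm_num) (by norm_num) (by norm_num)
      hun hvn hwn (by norm_num)
  have heq : u ^ ((1:ℝ)/3) * v ^ ((1:ℝ)/3) * w ^ ((1:ℝ)/3) = x * y * z := by
    rw [hu, hv, hw,
        Real.mul_rpow (Real.rpow_nonneg hx _) (Real.rpow_nonneg hy _),
        Real.mul_rpow (Real.rpow_nonneg hy _) (Real.rpow_nonneg hz _),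
        Real.mul_rpow (Real.rpow_nonneg hx _) (Real.rpow_nonneg hz _),
        ← Real.rpow_mul hx, ← Real.rpow_mul hy, ← Real.rpow_mul hz]
    norm_num
    rw [show (x ^ ((1:ℝ)/2) * y ^ ((1:ℝ)/2)) * (y ^ ((1:ℝ)/2) * z ^ ((1:ℝ)/2)) *
          (x ^ ((1:ℝ)/2) * z ^ ((1:ℝ)/2)) =
        (x ^ ((1:ℝ)/2) * x ^ ((1:ℝ)/2)) * (y ^ ((1:ℝ)/2) * y ^ ((1:ℝ)/2)) *
          (z ^ ((1:ℝ)/2) * z ^ ((1:ℝ)/2)) by ring,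
        ← Real.rpow_add' hx (by norm_num), ← Real.rpow_add' hy (by norm_num),
        ← Real.rpow_add' hz (by norm_num)]
    norm_num
  rw [heq] at key
  linarith

/-- Triple-sum estimate: n^{−3/2} ∑_{i₁,i₂,i₃=1}^n f(i₁−i₂) f(i₁−i₃) f(i₂−i₃)
≤ C n^{−1/2} (∑_{|k|≤n} f(k)^{3/2})². -/
theorem triple_sum_bound :
    ∃ C : ℝ, 0 < C ∧ ∀ f : ℤ → ℝ, (∀ k, 0 ≤ f k) →
      Summable (fun k : ℤ => f k ^ 2) → ∀ n : ℕ, 1 ≤ n →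
      (n : ℝ) ^ (-(3 : ℝ) / 2) *
          ∑ i₁ ∈ Finset.Icc 1 n, ∑ i₂ ∈ Finset.Icc 1 n, ∑ i₃ ∈ Finset.Icc 1 n,
            f ((i₁ : ℤ) - i₂) * f ((i₁ : ℤ) - i₃) * f ((i₂ : ℤ) - i₃) ≤
        C * (n : ℝ) ^ (-(1 : ℝ) / 2) *
          (∑ k ∈ Finset.Icc (-(n : ℤ)) (n : ℤ), f k ^ ((3 : ℝ) / 2)) ^ 2 := by
  refine ⟨1, one_pos, ?_⟩
  intro f hf _ n hn
  have hnpos : (0:ℝ) < n := by exact_mod_cast Nat.lt_of_lt_of_le Nat.zero_lt_one hn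
  set g : ℤ → ℝ := fun k => f k ^ ((3:ℝ)/2) with hg
  have hgnn : ∀ k, 0 ≤ g k := fun k => Real.rpow_nonneg (hf k) _
  set S : ℝ := ∑ k ∈ Finset.Icc (-(n : ℤ)) (n : ℤ), f k ^ ((3:ℝ)/2) with hS
  have hSnn : 0 ≤ S := Finset.sum_nonneg fun k _ => Real.rpow_nonneg (hf k) _
  -- row bound
  have key : ∀ e : ℕ → ℤ, Set.InjOn e (Finset.Icc 1 n) →
      (∀ j ∈ Finset.Icc 1 n, e j ∈ Finset.Icc (-(n:ℤ)) (n:ℤ)) →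
      ∑ j ∈ Finset.Icc 1 n, g (e j) ≤ S := by
    intro e hinj hmem
    rw [hS, ← Finset.sum_image (fun a ha b hb hab => hinj ha hb hab)]
    exact Finset.sum_le_sum_of_subset_of_nonneg
      (by intro k hk; obtain ⟨j, hj, rfl⟩ := Finset.mem_image.mp hk; exact hmem j hj)
      (fun k _ _ => Real.rpow_nonneg (hf k) _)
  have sub_mem : ∀ i j : ℕ, i ∈ Finset.Icc 1 n → j ∈ Finset.Icc 1 n →
      ((i:ℤ) - j) ∈ Finset.Icc (-(n:ℤ)) (n:ℤ) := by
    intro i j hi hj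
    simp only [Finset.mem_Icc] at *
    omega
  have row1 : ∀ i ∈ Finset.Icc 1 n, ∑ j ∈ Finset.Icc 1 n, g ((i:ℤ) - j) ≤ S := by
    intro i hi
    refine key (fun j => (i:ℤ) - j) (fun a _ b _ h => ?_) (fun j hj => sub_mem i j hi hj)
    simp only [sub_right_inj, Nat.cast_inj] at h
    exact h
  have row2 : ∀ i ∈ Finset.Icc 1 n, ∑ j ∈ Finset.Icc 1 n, g ((j:ℤ) - i) ≤ S := by
    intro i hi
    refine key (fun j => (j:ℤ) - i) (fun a _ b _ h => ?_) (fun j hj => sub_mem j i hj hi)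
    simp only [sub_left_inj, Nat.cast_inj] at h
    exact h
  -- three triple sums
  have T1 : ∑ i₁ ∈ Finset.Icc 1 n, ∑ i₂ ∈ Finset.Icc 1 n, ∑ i₃ ∈ Finset.Icc 1 n,
      g ((i₁:ℤ) - i₂) * g ((i₁:ℤ) - i₃) ≤ n * S^2 := by
    calc ∑ i₁ ∈ Finset.Icc 1 n, ∑ i₂ ∈ Finset.Icc 1 n, ∑ i₃ ∈ Finset.Icc 1 n,
        g ((i₁:ℤ) - i₂) * g ((i₁:ℤ) - i₃)
        = ∑ i₁ ∈ Finset.Icc 1 n, (∑ i₂ ∈ Finset.Icc 1 n, g ((i₁:ℤ) - i₂)) *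
            (∑ i₃ ∈ Finset.Icc 1 n, g ((i₁:ℤ) - i₃)) := by
          refine Finset.sum_congr rfl fun i₁ _ => ?_
          rw [Finset.sum_mul]
          exact Finset.sum_congr rfl fun i₂ _ => by rw [Finset.mul_sum]
      _ ≤ ∑ i₁ ∈ Finset.Icc 1 n, S * S := by
          refine Finset.sum_le_sum fun i₁ hi₁ => ?_
          exact mul_le_mul (row1 i₁ hi₁) (row1 i₁ hi₁)
            (Finset.sum_nonneg fun j _ => hgnn _) hSnn
      _ = n * S^2 := by
          rw [Finset.sum_const, Nat.card_Icc]; simp [sq]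
  have T2 : ∑ i₁ ∈ Finset.Icc 1 n, ∑ i₂ ∈ Finset.Icc 1 n, ∑ i₃ ∈ Finset.Icc 1 n,
      g ((i₁:ℤ) - i₃) * g ((i₂:ℤ) - i₃) ≤ n * S^2 := by
    calc ∑ i₁ ∈ Finset.Icc 1 n, ∑ i₂ ∈ Finset.Icc 1 n, ∑ i₃ ∈ Finset.Icc 1 n,
        g ((i₁:ℤ) - i₃) * g ((i₂:ℤ) - i₃)
        = ∑ i₁ ∈ Finset.Icc 1 n, ∑ i₃ ∈ Finset.Icc 1 n,
            g ((i₁:ℤ) - i₃) * ∑ i₂ ∈ Finset.Icc 1 n, g ((i₂:ℤ) - i₃) := by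
          refine Finset.sum_congr rfl fun i₁ _ => ?_
          rw [Finset.sum_comm]
          exact Finset.sum_congr rfl fun i₃ _ => by rw [Finset.mul_sum]
      _ ≤ ∑ i₁ ∈ Finset.Icc 1 n, ∑ i₃ ∈ Finset.Icc 1 n, g ((i₁:ℤ) - i₃) * S := by
          refine Finset.sum_le_sum fun i₁ _ => Finset.sum_le_sum fun i₃ hi₃ => ?_
          exact mul_le_mul_of_nonneg_left (row2 i₃ hi₃) (hgnn _)
      _ ≤ ∑ i₁ ∈ Finset.Icc 1 n, S * S := by
          refine Finset.sum_le_sum fun i₁ hi₁ => ?_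
          rw [← Finset.sum_mul]
          exact mul_le_mul_of_nonneg_right (row1 i₁ hi₁) hSnn
      _ = n * S^2 := by
          rw [Finset.sum_const, Nat.card_Icc]; simp [sq]
  have T3 : ∑ i₁ ∈ Finset.Icc 1 n, ∑ i₂ ∈ Finset.Icc 1 n, ∑ i₃ ∈ Finset.Icc 1 n,
      g ((i₁:ℤ) - i₂) * g ((i₂:ℤ) - i₃) ≤ n * S^2 := by
    calc ∑ i₁ ∈ Finset.Icc 1 n, ∑ i₂ ∈ Finset.Icc 1 n, ∑ i₃ ∈ Finset.Icc 1 n,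
        g ((i₁:ℤ) - i₂) * g ((i₂:ℤ) - i₃)
        = ∑ i₁ ∈ Finset.Icc 1 n, ∑ i₂ ∈ Finset.Icc 1 n,
            g ((i₁:ℤ) - i₂) * ∑ i₃ ∈ Finset.Icc 1 n, g ((i₂:ℤ) - i₃) := by
          exact Finset.sum_congr rfl fun i₁ _ => Finset.sum_congr rfl fun i₂ _ => by
            rw [Finset.mul_sum]
      _ ≤ ∑ i₁ ∈ Finset.Icc 1 n, ∑ i₂ ∈ Finset.Icc 1 n, g ((i₁:ℤ) - i₂) * S := by
          refine Finset.sum_le_sum fun i₁ _ => Finset.sum_le_sum fun i₂ hi₂ => ?_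
          exact mul_le_mul_of_nonneg_left (row1 i₂ hi₂) (hgnn _)
      _ ≤ ∑ i₁ ∈ Finset.Icc 1 n, S * S := by
          refine Finset.sum_le_sum fun i₁ hi₁ => ?_
          rw [← Finset.sum_mul]
          exact mul_le_mul_of_nonneg_right (row1 i₁ hi₁) hSnn
      _ = n * S^2 := by
          rw [Finset.sum_const, Nat.card_Icc]; simp [sq]
  -- pointwise AM-GM bound on the triple sum
  have Tbound : ∑ i₁ ∈ Finset.Icc 1 n, ∑ i₂ ∈ Finset.Icc 1 n, ∑ i₃ ∈ Finset.Icc 1 n,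
      f ((i₁ : ℤ) - i₂) * f ((i₁ : ℤ) - i₃) * f ((i₂ : ℤ) - i₃) ≤ n * S^2 := by
    have step : ∑ i₁ ∈ Finset.Icc 1 n, ∑ i₂ ∈ Finset.Icc 1 n, ∑ i₃ ∈ Finset.Icc 1 n,
        f ((i₁ : ℤ) - i₂) * f ((i₁ : ℤ) - i₃) * f ((i₂ : ℤ) - i₃) ≤
        ∑ i₁ ∈ Finset.Icc 1 n, ∑ i₂ ∈ Finset.Icc 1 n, ∑ i₃ ∈ Finset.Icc 1 n,
          (g ((i₁:ℤ) - i₂) * g ((i₁:ℤ) - i₃) + g ((i₁:ℤ) - i₃) * g ((i₂:ℤ) - i₃)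
            + g ((i₁:ℤ) - i₂) * g ((i₂:ℤ) - i₃)) / 3 := by
      refine Finset.sum_le_sum fun i₁ _ => Finset.sum_le_sum fun i₂ _ =>
        Finset.sum_le_sum fun i₃ _ => ?_
      exact amgm3 _ _ _ (hf _) (hf _) (hf _)
    have split : ∑ i₁ ∈ Finset.Icc 1 n, ∑ i₂ ∈ Finset.Icc 1 n, ∑ i₃ ∈ Finset.Icc 1 n,
        (g ((i₁:ℤ) - i₂) * g ((i₁:ℤ) - i₃) + g ((i₁:ℤ) - i₃) * g ((i₂:ℤ) - i₃)
          + g ((i₁:ℤ) - i₂) * g ((i₂:ℤ) - i₃)) / 3 =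
        ((∑ i₁ ∈ Finset.Icc 1 n, ∑ i₂ ∈ Finset.Icc 1 n, ∑ i₃ ∈ Finset.Icc 1 n,
          g ((i₁:ℤ) - i₂) * g ((i₁:ℤ) - i₃)) +
        (∑ i₁ ∈ Finset.Icc 1 n, ∑ i₂ ∈ Finset.Icc 1 n, ∑ i₃ ∈ Finset.Icc 1 n,
          g ((i₁:ℤ) - i₃) * g ((i₂:ℤ) - i₃)) +
        (∑ i₁ ∈ Finset.Icc 1 n, ∑ i₂ ∈ Finset.Icc 1 n, ∑ i₃ ∈ Finset.Icc 1 n,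
          g ((i₁:ℤ) - i₂) * g ((i₂:ℤ) - i₃))) / 3 := by
      simp only [← Finset.sum_div, Finset.sum_add_distrib]
    calc _ ≤ _ := step
      _ = _ := split
      _ ≤ ((n * S^2) + (n * S^2) + (n * S^2)) / 3 := by
          apply div_le_div_of_nonneg_right ?_ (by norm_num)
          · linarith
      _ = n * S^2 := by ring
  -- finish
  have hpow : (n : ℝ) ^ (-(3 : ℝ) / 2) * ((n:ℝ) * S^2) =
      (n : ℝ) ^ (-(1 : ℝ) / 2) * S^2 := by
    rw [show ((n:ℝ) ^ (-(3:ℝ)/2) * ((n:ℝ) * S^2)) =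
        ((n:ℝ) ^ (-(3:ℝ)/2) * (n:ℝ) ^ (1:ℝ)) * S^2 by rw [Real.rpow_one]; ring,
      ← Real.rpow_add hnpos]
    norm_num
  calc (n : ℝ) ^ (-(3 : ℝ) / 2) *
          ∑ i₁ ∈ Finset.Icc 1 n, ∑ i₂ ∈ Finset.Icc 1 n, ∑ i₃ ∈ Finset.Icc 1 n,
            f ((i₁ : ℤ) - i₂) * f ((i₁ : ℤ) - i₃) * f ((i₂ : ℤ) - i₃)
      ≤ (n : ℝ) ^ (-(3 : ℝ) / 2) * ((n:ℝ) * S^2) :=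
        mul_le_mul_of_nonneg_left Tbound (Real.rpow_nonneg hnpos.le _)
    _ = (n : ℝ) ^ (-(1 : ℝ) / 2) * S^2 := hpow
    _ = 1 * (n : ℝ) ^ (-(1 : ℝ) / 2) * S^2 := by ring
end

section
/- There is a constant C > 0 such that for every nonnegative function f on ℤ with ∑_{k∈ℤ} f(k)² < ∞ and every n ≥ 1, n^{−2} ∑_{i₁,i₂,i₃,i₄=1}^n f(i₁−i₂) f(i₂−i₃) f(i₃−i₄) f(i₁−i₄) ≤ C n^{−1} (∑_{|k|≤n} f(k)^{4/3})³. -/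
open scoped BigOperators

set_option maxHeartbeats 1000000

private lemma rpow_third_mul {x : ℝ} (hx : 0 ≤ x) :
    x ^ ((2:ℝ)/3) * x ^ ((1:ℝ)/3) = x := by
  rcases hx.eq_or_lt with h | h
  · rw [← h, Real.zero_rpow (by norm_num), Real.zero_rpow (by norm_num), mul_zero]
  · rw [← Real.rpow_add h]
    norm_num

private lemma rpow_sq {x : ℝ} (hx : 0 ≤ x) {p : ℝ} (hp : p ≠ 0) :
    (x ^ p) ^ 2 = x ^ (2 * p) := by
  rcases hx.eq_or_lt with h | h
  · rw [← h, Real.zero_rpow hp, Real.zero_rpow (mul_ne_zero two_ne_zero hp)]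
    norm_num
  · rw [pow_two, ← Real.rpow_add h]
    ring_nf

/-- Sum of a nonneg function over any finset is at most its sum over `T`
if it vanishes outside `T`. -/
private lemma sum_le_of_support {T A : Finset ℤ} {w : ℤ → ℝ}
    (hw : ∀ k, 0 ≤ w k) (hs : ∀ k ∉ T, w k = 0) :
    ∑ u ∈ A, w u ≤ ∑ u ∈ T, w u := by
  calc ∑ u ∈ A, w u = ∑ u ∈ A ∩ T, w u := by
        refine (Finset.sum_subset Finset.inter_subset_left ?_).symm
        intro x hxA hx
        exact hs x fun hxT => hx (Finset.mem_inter.mpr ⟨hxA, hxT⟩)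
    _ ≤ ∑ u ∈ T, w u :=
        Finset.sum_le_sum_of_subset_of_nonneg Finset.inter_subset_right
          fun i _ _ => hw i

/-- Reindexed sum bounded by full sum, support version. -/
private lemma sum_comp_le' {α : Type*} (I : Finset α) (T : Finset ℤ) (e : α → ℤ)
    (he : Set.InjOn e I) (w : ℤ → ℝ) (hw : ∀ k, 0 ≤ w k)
    (hs : ∀ k ∉ T, w k = 0) :
    ∑ i ∈ I, w (e i) ≤ ∑ t ∈ T, w t := by
  rw [← Finset.sum_image (fun a ha b hb h => he ha hb h)]
  exact sum_le_of_support hw hs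

/-- Reindexed sum bounded by full sum, subset version. -/
private lemma sum_comp_le {α : Type*} (I : Finset α) (T : Finset ℤ) (e : α → ℤ)
    (he : Set.InjOn e I) (hmem : ∀ i ∈ I, e i ∈ T) (w : ℤ → ℝ)
    (hw : ∀ k, 0 ≤ w k) :
    ∑ i ∈ I, w (e i) ≤ ∑ t ∈ T, w t := by
  rw [← Finset.sum_image (fun a ha b hb h => he ha hb h)]
  refine Finset.sum_le_sum_of_subset_of_nonneg ?_ fun i _ _ => hw i
  intro x hx
  obtain ⟨i, hi, rfl⟩ := Finset.mem_image.mp hx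
  exact hmem i hi

/-- Discrete Young-type inequality: the `ℓ²` norm squared of a convolution of
two nonneg functions supported in `T` is bounded by `S³` where `S` dominates
the `4/3`-power sums. -/
private lemma young_key (T : Finset ℤ) (g₁ g₂ : ℤ → ℝ) (S : ℝ)
    (h₁ : ∀ k, 0 ≤ g₁ k) (h₂ : ∀ k, 0 ≤ g₂ k)
    (s₂ : ∀ k ∉ T, g₂ k = 0)
    (hS₁ : ∑ k ∈ T, g₁ k ^ ((4:ℝ)/3) ≤ S)
    (hS₂ : ∑ k ∈ T, g₂ k ^ ((4:ℝ)/3) ≤ S) :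
    ∑ t ∈ T, (∑ a ∈ T, g₁ a * g₂ (t - a)) ^ 2 ≤ S ^ 3 := by
  have hS0 : 0 ≤ S :=
    le_trans (Finset.sum_nonneg fun k _ => Real.rpow_nonneg (h₁ k) _) hS₁
  have hshift : ∀ e : ℤ → ℤ, Function.Injective e →
      ∑ x ∈ T, g₂ (e x) ^ ((4:ℝ)/3) ≤ S := by
    intro e he
    refine le_trans (sum_comp_le' T T e (he.injOn) (fun u => g₂ u ^ ((4:ℝ)/3))
      (fun k => Real.rpow_nonneg (h₂ k) _) ?_) hS₂
    intro k hk
    rw [s₂ k hk, Real.zero_rpow (by norm_num)]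
  have key : ∀ t ∈ T, (∑ a ∈ T, g₁ a * g₂ (t - a)) ^ 2 ≤
      (∑ a ∈ T, g₁ a ^ ((4:ℝ)/3) * g₂ (t - a) ^ ((4:ℝ)/3)) * S := by
    intro t _
    have hVnn : 0 ≤ ∑ a ∈ T, g₁ a ^ ((2:ℝ)/3) * g₂ (t - a) ^ ((2:ℝ)/3) :=
      Finset.sum_nonneg fun a _ =>
        mul_nonneg (Real.rpow_nonneg (h₁ a) _) (Real.rpow_nonneg (h₂ _) _)
    have hhnn : 0 ≤ ∑ a ∈ T, g₁ a ^ ((4:ℝ)/3) * g₂ (t - a) ^ ((4:ℝ)/3) :=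
      Finset.sum_nonneg fun a _ =>
        mul_nonneg (Real.rpow_nonneg (h₁ a) _) (Real.rpow_nonneg (h₂ _) _)
    have hV2 : (∑ a ∈ T, g₁ a ^ ((2:ℝ)/3) * g₂ (t - a) ^ ((2:ℝ)/3)) ^ 2 ≤ S * S := by
      calc (∑ a ∈ T, g₁ a ^ ((2:ℝ)/3) * g₂ (t - a) ^ ((2:ℝ)/3)) ^ 2
          ≤ (∑ a ∈ T, (g₁ a ^ ((2:ℝ)/3)) ^ 2) * ∑ a ∈ T, (g₂ (t - a) ^ ((2:ℝ)/3)) ^ 2 :=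
            Finset.sum_mul_sq_le_sq_mul_sq T _ _
        _ = (∑ a ∈ T, g₁ a ^ ((4:ℝ)/3)) * ∑ a ∈ T, g₂ (t - a) ^ ((4:ℝ)/3) := by
            congr 1 <;> refine Finset.sum_congr rfl fun a _ => ?_
            · rw [rpow_sq (h₁ a) (by norm_num)]; norm_num
            · rw [rpow_sq (h₂ _) (by norm_num)]; norm_num
        _ ≤ S * S := by
            refine mul_le_mul hS₁ (hshift (fun x => t - x) fun a b h => by dsimp only at h; omega) ?_ hS0
            exact Finset.sum_nonneg fun a _ => Real.rpow_nonneg (h₂ _) _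
    have hVS : (∑ a ∈ T, g₁ a ^ ((2:ℝ)/3) * g₂ (t - a) ^ ((2:ℝ)/3)) ≤ S := by
      nlinarith [hV2, hVnn, hS0]
    calc (∑ a ∈ T, g₁ a * g₂ (t - a)) ^ 2
        = (∑ a ∈ T, (g₁ a ^ ((2:ℝ)/3) * g₂ (t - a) ^ ((2:ℝ)/3)) *
            (g₁ a ^ ((1:ℝ)/3) * g₂ (t - a) ^ ((1:ℝ)/3))) ^ 2 := by
          congr 1
          refine Finset.sum_congr rfl fun a _ => ?_
          rw [mul_mul_mul_comm, rpow_third_mul (h₁ a), rpow_third_mul (h₂ _)]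
      _ ≤ (∑ a ∈ T, (g₁ a ^ ((2:ℝ)/3) * g₂ (t - a) ^ ((2:ℝ)/3)) ^ 2) *
            ∑ a ∈ T, (g₁ a ^ ((1:ℝ)/3) * g₂ (t - a) ^ ((1:ℝ)/3)) ^ 2 :=
          Finset.sum_mul_sq_le_sq_mul_sq T _ _
      _ = (∑ a ∈ T, g₁ a ^ ((4:ℝ)/3) * g₂ (t - a) ^ ((4:ℝ)/3)) *
            ∑ a ∈ T, g₁ a ^ ((2:ℝ)/3) * g₂ (t - a) ^ ((2:ℝ)/3) := by
          congr 1 <;> refine Finset.sum_congr rfl fun a _ => ?_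
          · rw [mul_pow, rpow_sq (h₁ a) (by norm_num), rpow_sq (h₂ _) (by norm_num)]
            norm_num
          · rw [mul_pow, rpow_sq (h₁ a) (by norm_num), rpow_sq (h₂ _) (by norm_num)]
            norm_num
      _ ≤ (∑ a ∈ T, g₁ a ^ ((4:ℝ)/3) * g₂ (t - a) ^ ((4:ℝ)/3)) * S :=
          mul_le_mul_of_nonneg_left hVS hhnn
  calc ∑ t ∈ T, (∑ a ∈ T, g₁ a * g₂ (t - a)) ^ 2
      ≤ ∑ t ∈ T, (∑ a ∈ T, g₁ a ^ ((4:ℝ)/3) * g₂ (t - a) ^ ((4:ℝ)/3)) * S :=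
        Finset.sum_le_sum key
    _ = (∑ t ∈ T, ∑ a ∈ T, g₁ a ^ ((4:ℝ)/3) * g₂ (t - a) ^ ((4:ℝ)/3)) * S :=
        (Finset.sum_mul _ _ _).symm
    _ ≤ (S * S) * S := by
        refine mul_le_mul_of_nonneg_right ?_ hS0
        rw [Finset.sum_comm]
        calc ∑ a ∈ T, ∑ t ∈ T, g₁ a ^ ((4:ℝ)/3) * g₂ (t - a) ^ ((4:ℝ)/3)
            = ∑ a ∈ T, g₁ a ^ ((4:ℝ)/3) * ∑ t ∈ T, g₂ (t - a) ^ ((4:ℝ)/3) := by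
              refine Finset.sum_congr rfl fun a _ => ?_
              rw [Finset.mul_sum]
          _ ≤ ∑ a ∈ T, g₁ a ^ ((4:ℝ)/3) * S :=
              Finset.sum_le_sum fun a _ =>
                mul_le_mul_of_nonneg_left
                  (hshift (fun x => x - a) fun x y h => by dsimp only at h; omega)
                  (Real.rpow_nonneg (h₁ a) _)
          _ = (∑ a ∈ T, g₁ a ^ ((4:ℝ)/3)) * S := (Finset.sum_mul _ _ _).symm
          _ ≤ S * S := mul_le_mul_of_nonneg_right hS₁ hS0
    _ = S ^ 3 := by ring

/-- Cyclic quadruple-sum estimate: n^{−2} ∑_{i₁,i₂,i₃,i₄=1}^n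
f(i₁−i₂) f(i₂−i₃) f(i₃−i₄) f(i₁−i₄) ≤ C n^{−1} (∑_{|k|≤n} f(k)^{4/3})³. -/
theorem quadruple_sum_bound :
    ∃ C : ℝ, 0 < C ∧ ∀ f : ℤ → ℝ, (∀ k, 0 ≤ f k) →
      Summable (fun k : ℤ => f k ^ 2) → ∀ n : ℕ, 1 ≤ n →
      (n : ℝ) ^ (-(2 : ℝ)) *
          ∑ i₁ ∈ Finset.Icc 1 n, ∑ i₂ ∈ Finset.Icc 1 n, ∑ i₃ ∈ Finset.Icc 1 n,
            ∑ i₄ ∈ Finset.Icc 1 n,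
              f ((i₁ : ℤ) - i₂) * f ((i₂ : ℤ) - i₃) * f ((i₃ : ℤ) - i₄) * f ((i₁ : ℤ) - i₄) ≤
        C * (n : ℝ)⁻¹ *
          (∑ k ∈ Finset.Icc (-(n : ℤ)) (n : ℤ), f k ^ ((4 : ℝ) / 3)) ^ 3 := by
  refine ⟨1, one_pos, ?_⟩
  intro f hf _ n hn
  set I : Finset ℕ := Finset.Icc 1 n with hI
  set T : Finset ℤ := Finset.Icc (-(n : ℤ)) (n : ℤ) with hT
  set g : ℤ → ℝ := fun k => if k ∈ T then f k else 0 with hg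
  have hg0 : ∀ k, 0 ≤ g k := by
    intro k; rw [hg]; dsimp only; split
    · exact hf k
    · exact le_refl 0
  have hgs : ∀ k ∉ T, g k = 0 := fun k hk => if_neg hk
  have hmemT : ∀ i ∈ I, ∀ j ∈ I, ((i : ℤ) - j) ∈ T := by
    intro i hi j hj
    rw [hI, Finset.mem_Icc] at hi hj
    rw [hT, Finset.mem_Icc]
    omega
  have hgf : ∀ i ∈ I, ∀ j ∈ I, g ((i : ℤ) - j) = f ((i : ℤ) - j) :=
    fun i hi j hj => if_pos (hmemT i hi j hj)
  set S := ∑ k ∈ T, f k ^ ((4:ℝ)/3) with hS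
  have hS0 : 0 ≤ S := Finset.sum_nonneg fun k _ => Real.rpow_nonneg (hf k) _
  have hSg : ∑ k ∈ T, g k ^ ((4:ℝ)/3) = S := by
    refine Finset.sum_congr rfl fun k hk => ?_
    rw [hg]; simp only [if_pos hk]
  set P : ℤ → ℝ := fun t => ∑ a ∈ T, g a * g (t - a) with hP
  set R : ℤ → ℝ := fun t => ∑ a ∈ T, g a * g (a - t) with hR
  have hP0 : ∀ t, 0 ≤ P t := fun t =>
    Finset.sum_nonneg fun a _ => mul_nonneg (hg0 a) (hg0 _)
  have hR0 : ∀ t, 0 ≤ R t := fun t =>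
    Finset.sum_nonneg fun a _ => mul_nonneg (hg0 a) (hg0 _)
  have hPsum : ∑ t ∈ T, P t ^ 2 ≤ S ^ 3 :=
    young_key T g g S hg0 hg0 hgs (le_of_eq hSg) (le_of_eq hSg)
  have hRsum : ∑ t ∈ T, R t ^ 2 ≤ S ^ 3 := by
    have hneg : ∀ k ∉ T, g (-k) = 0 := by
      intro k hk
      refine hgs _ ?_
      rw [hT, Finset.mem_Icc] at hk ⊢
      omega
    have hSneg : ∑ k ∈ T, g (-k) ^ ((4:ℝ)/3) ≤ S := by
      refine le_trans (sum_comp_le' T T (fun k => -k)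
        (fun a _ b _ h => by dsimp only at h; omega) (fun u => g u ^ ((4:ℝ)/3))
        (fun k => Real.rpow_nonneg (hg0 k) _) ?_) (le_of_eq hSg)
      intro k hk
      rw [hgs k hk, Real.zero_rpow (by norm_num)]
    have := young_key T g (fun u => g (-u)) S hg0 (fun u => hg0 (-u)) hneg
      (le_of_eq hSg) hSneg
    calc ∑ t ∈ T, R t ^ 2
        = ∑ t ∈ T, (∑ a ∈ T, g a * (fun u => g (-u)) (t - a)) ^ 2 := by
          refine Finset.sum_congr rfl fun t _ => ?_
          rw [hR]; dsimp only
          refine congrArg (· ^ 2) (Finset.sum_congr rfl fun a _ => ?_)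
          rw [neg_sub]
      _ ≤ S ^ 3 := this
  -- bounds on the inner double sums
  have hF : ∀ i₁ ∈ I, ∀ i₃ ∈ I,
      (∑ i₂ ∈ I, f ((i₁:ℤ) - i₂) * f ((i₂:ℤ) - i₃)) ≤ P ((i₁:ℤ) - i₃) := by
    intro i₁ h₁ i₃ h₃
    have heq : ∀ i₂ ∈ I, f ((i₁:ℤ) - i₂) * f ((i₂:ℤ) - i₃) =
        (fun a => g a * g (((i₁:ℤ) - i₃) - a)) ((i₁:ℤ) - i₂) := by
      intro i₂ h₂; dsimp only
      rw [show ((i₁:ℤ) - i₃) - ((i₁:ℤ) - i₂) = (i₂:ℤ) - i₃ by ring,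
        ← hgf i₁ h₁ i₂ h₂, ← hgf i₂ h₂ i₃ h₃]
    rw [Finset.sum_congr rfl heq]
    exact sum_comp_le I T (fun i₂ => (i₁:ℤ) - i₂)
      (fun a _ b _ h => by dsimp only at h; omega) (fun i hi => hmemT i₁ h₁ i hi)
      (fun a => g a * g (((i₁:ℤ) - i₃) - a))
      (fun a => mul_nonneg (hg0 a) (hg0 _))
  have hG : ∀ i₁ ∈ I, ∀ i₃ ∈ I,
      (∑ i₄ ∈ I, f ((i₃:ℤ) - i₄) * f ((i₁:ℤ) - i₄)) ≤ R ((i₁:ℤ) - i₃) := by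
    intro i₁ h₁ i₃ h₃
    have heq : ∀ i₄ ∈ I, f ((i₃:ℤ) - i₄) * f ((i₁:ℤ) - i₄) =
        (fun a => g a * g (a - ((i₁:ℤ) - i₃))) ((i₁:ℤ) - i₄) := by
      intro i₄ h₄; dsimp only
      rw [show ((i₁:ℤ) - i₄) - ((i₁:ℤ) - i₃) = (i₃:ℤ) - i₄ by ring,
        ← hgf i₃ h₃ i₄ h₄, ← hgf i₁ h₁ i₄ h₄]
      exact mul_comm _ _
    rw [Finset.sum_congr rfl heq]
    exact sum_comp_le I T (fun i₄ => (i₁:ℤ) - i₄)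
      (fun a _ b _ h => by dsimp only at h; omega) (fun i hi => hmemT i₁ h₁ i hi)
      (fun a => g a * g (a - ((i₁:ℤ) - i₃)))
      (fun a => mul_nonneg (hg0 a) (hg0 _))
  have hPsq : ∀ i₁ ∈ I, ∑ i₃ ∈ I, P ((i₁:ℤ) - i₃) ^ 2 ≤ ∑ t ∈ T, P t ^ 2 := by
    intro i₁ h₁
    exact sum_comp_le I T (fun i₃ => (i₁:ℤ) - i₃)
      (fun a _ b _ h => by dsimp only at h; omega) (fun i hi => hmemT i₁ h₁ i hi)
      (fun t => P t ^ 2) (fun t => sq_nonneg _)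
  have hRsq : ∀ i₁ ∈ I, ∑ i₃ ∈ I, R ((i₁:ℤ) - i₃) ^ 2 ≤ ∑ t ∈ T, R t ^ 2 := by
    intro i₁ h₁
    exact sum_comp_le I T (fun i₃ => (i₁:ℤ) - i₃)
      (fun a _ b _ h => by dsimp only at h; omega) (fun i hi => hmemT i₁ h₁ i hi)
      (fun t => R t ^ 2) (fun t => sq_nonneg _)
  -- the main quadruple sum bound
  have hQ : (∑ i₁ ∈ I, ∑ i₂ ∈ I, ∑ i₃ ∈ I, ∑ i₄ ∈ I,
      f ((i₁ : ℤ) - i₂) * f ((i₂ : ℤ) - i₃) * f ((i₃ : ℤ) - i₄) * f ((i₁ : ℤ) - i₄))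
      ≤ (n : ℝ) * S ^ 3 := by
    calc (∑ i₁ ∈ I, ∑ i₂ ∈ I, ∑ i₃ ∈ I, ∑ i₄ ∈ I,
        f ((i₁ : ℤ) - i₂) * f ((i₂ : ℤ) - i₃) * f ((i₃ : ℤ) - i₄) * f ((i₁ : ℤ) - i₄))
        = ∑ i₁ ∈ I, ∑ i₃ ∈ I,
            (∑ i₂ ∈ I, f ((i₁:ℤ) - i₂) * f ((i₂:ℤ) - i₃)) *
            (∑ i₄ ∈ I, f ((i₃:ℤ) - i₄) * f ((i₁:ℤ) - i₄)) := by
          refine Finset.sum_congr rfl fun i₁ _ => ?_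
          rw [Finset.sum_comm]
          refine Finset.sum_congr rfl fun i₃ _ => ?_
          rw [Finset.sum_mul]
          refine Finset.sum_congr rfl fun i₂ _ => ?_
          rw [Finset.mul_sum]
          refine Finset.sum_congr rfl fun i₄ _ => ?_
          ring
      _ ≤ ∑ i₁ ∈ I, ∑ i₃ ∈ I,
            (P ((i₁:ℤ) - i₃) ^ 2 + R ((i₁:ℤ) - i₃) ^ 2) / 2 := by
          refine Finset.sum_le_sum fun i₁ h₁ => Finset.sum_le_sum fun i₃ h₃ => ?_
          have h1 := hF i₁ h₁ i₃ h₃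
          have h2 := hG i₁ h₁ i₃ h₃
          have hGnn : 0 ≤ ∑ i₄ ∈ I, f ((i₃:ℤ) - i₄) * f ((i₁:ℤ) - i₄) :=
            Finset.sum_nonneg fun i _ => mul_nonneg (hf _) (hf _)
          have hFnn : 0 ≤ ∑ i₂ ∈ I, f ((i₁:ℤ) - i₂) * f ((i₂:ℤ) - i₃) :=
            Finset.sum_nonneg fun i _ => mul_nonneg (hf _) (hf _)
          have := mul_le_mul h1 h2 hGnn (hP0 _)
          nlinarith [sq_nonneg (P ((i₁:ℤ) - i₃) - R ((i₁:ℤ) - i₃))]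
      _ ≤ ∑ i₁ ∈ I, (S ^ 3 + S ^ 3) / 2 := by
          refine Finset.sum_le_sum fun i₁ h₁ => ?_
          rw [← Finset.sum_div, Finset.sum_add_distrib]
          have := hPsq i₁ h₁
          have := hRsq i₁ h₁
          linarith [hPsum, hRsum]
      _ = (n : ℝ) * S ^ 3 := by
          rw [Finset.sum_const, hI, Nat.card_Icc]
          simp only [nsmul_eq_mul, Nat.add_sub_cancel]
          ring
  have hn0 : (0:ℝ) < (n:ℝ) := by
    have : 0 < n := hn
    exact_mod_cast this
  have hrpow : (n : ℝ) ^ (-(2 : ℝ)) = ((n:ℝ) ^ 2)⁻¹ := by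
    rw [Real.rpow_neg hn0.le, show (2:ℝ) = ((2:ℕ) : ℝ) by norm_num,
      Real.rpow_natCast]
  rw [hrpow]
  calc ((n:ℝ) ^ 2)⁻¹ * (∑ i₁ ∈ I, ∑ i₂ ∈ I, ∑ i₃ ∈ I, ∑ i₄ ∈ I,
      f ((i₁ : ℤ) - i₂) * f ((i₂ : ℤ) - i₃) * f ((i₃ : ℤ) - i₄) * f ((i₁ : ℤ) - i₄))
      ≤ ((n:ℝ) ^ 2)⁻¹ * ((n : ℝ) * S ^ 3) :=
        mul_le_mul_of_nonneg_left hQ (by positivity)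
    _ = 1 * (n:ℝ)⁻¹ * S ^ 3 := by
        field_simp
end
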